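/- Let D, b, c > 0 and K > 0, set k = K/(2Dbc) and x̂ = √(1/2 + k²/(2√(k² + k⁴))), and define f₃(x) = Kx² + 2Dbc·x√(1 − x²) + Dc² for x ∈ [0,1]. Then x̂ ∈ (0,1) is the unique zero of f₃′ in [0,1], f₃ is strictly increasing on [0, x̂], and f₃ is strictly decreasing on [x̂, 1]. -/

import Mathlib

set_option maxHeartbeats 1000000 in
theorem relay_branch_unimodal (D b c K : ℝ) (hD : 0 < D) (hb : 0 < b) (hc : 0 < c)
    (hK : 0 < K)
    (k : ℝ) (hk : k = K / (2 * D * b * c))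
    (xhat : ℝ) (hxhat : xhat = Real.sqrt (1 / 2 + k ^ 2 / (2 * Real.sqrt (k ^ 2 + k ^ 4))))
    (f₃ : ℝ → ℝ)
    (hf₃ : ∀ x, f₃ x = K * x ^ 2 + 2 * D * b * c * x * Real.sqrt (1 - x ^ 2) + D * c ^ 2) :
    xhat ∈ Set.Ioo (0:ℝ) 1 ∧
    HasDerivAt f₃ 0 xhat ∧
    (∀ x ∈ Set.Icc (0:ℝ) 1, HasDerivAt f₃ 0 x → x = xhat) ∧
    StrictMonoOn f₃ (Set.Icc (0:ℝ) xhat) ∧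
    StrictAntiOn f₃ (Set.Icc xhat 1) := by
  have hM : 0 < 2 * D * b * c := by positivity
  set M := 2 * D * b * c with hMdef
  have hk0 : 0 < k := by rw [hk]; positivity
  have hKM : K = M * k := by rw [hk]; field_simp
  set s := Real.sqrt (k ^ 2 + k ^ 4) with hsdef
  have hs0 : 0 < s := Real.sqrt_pos.mpr (by positivity)
  have hs2 : s ^ 2 = k ^ 2 + k ^ 4 := Real.sq_sqrt (by positivity)
  have hks : k ^ 2 < s := by nlinarith [hs2, hs0, hk0, sq_nonneg k]
  have hx2eq : xhat ^ 2 = 1 / 2 + k ^ 2 / (2 * s) := by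
    rw [hxhat]; exact Real.sq_sqrt (by positivity)
  have hx0 : 0 < xhat := by rw [hxhat]; exact Real.sqrt_pos.mpr (by positivity)
  have hhalf : 1 / 2 < xhat ^ 2 := by
    rw [hx2eq]; have : 0 < k ^ 2 / (2 * s) := by positivity
    linarith
  have hx2lt : xhat ^ 2 < 1 := by
    rw [hx2eq]
    have h : k ^ 2 / (2 * s) < 1 / 2 := by
      rw [div_lt_iff₀ (by positivity)]; nlinarith [hks]
    linarith
  have hx1 : xhat < 1 := by nlinarith [hx2lt, hx0]
  -- key product identity
  have h1 : xhat ^ 2 = (s + k ^ 2) / (2 * s) := by rw [hx2eq]; field_simp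
  have hprod : 4 * (1 + k ^ 2) * (1 - xhat ^ 2) * xhat ^ 2 = 1 := by
    rw [h1]; field_simp; nlinarith [hs2]
  have hiden : ∀ t : ℝ, (2 * t - 1) ^ 2 - 4 * k ^ 2 * t * (1 - t)
      = 4 * (1 + k ^ 2) * (t - (1 - xhat ^ 2)) * (t - xhat ^ 2) := by
    intro t; linear_combination (-1) * hprod
  -- the derivative formula on (-1, 1)
  have hfe : f₃ = fun y => K * y ^ 2 + M * y * Real.sqrt (1 - y ^ 2) + D * c ^ 2 :=
    funext hf₃
  have hderiv : ∀ x : ℝ, -1 < x → x < 1 →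
      HasDerivAt f₃ (2 * K * x + M * ((1 - 2 * x ^ 2) / Real.sqrt (1 - x ^ 2))) x := by
    intro x hxm hxp
    have h1x : 0 < 1 - x ^ 2 := by nlinarith
    set r := Real.sqrt (1 - x ^ 2) with hrdef
    have hr : 0 < r := Real.sqrt_pos.mpr h1x
    have hr2 : r ^ 2 = 1 - x ^ 2 := Real.sq_sqrt h1x.le
    have hu : HasDerivAt (fun y : ℝ => 1 - y ^ 2) (-(2 * x)) x := by
      simpa using (hasDerivAt_pow 2 x).const_sub 1
    have hsq : HasDerivAt (fun y : ℝ => Real.sqrt (1 - y ^ 2))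
        (1 / (2 * r) * (-(2 * x))) x :=
      (Real.hasDerivAt_sqrt (ne_of_gt h1x)).comp x hu
    have hMy : HasDerivAt (fun y : ℝ => M * y) M x := by
      simpa using (hasDerivAt_id x).const_mul M
    have htot := (((hasDerivAt_pow 2 x).const_mul K).add (hMy.mul hsq)).add_const (D * c ^ 2)
    rw [hfe]
    refine htot.congr_deriv ?_
    have hx2r : 1 - 2 * x ^ 2 = r ^ 2 - x ^ 2 := by rw [hr2]; ring
    rw [hx2r]
    field_simp
    ring
  -- value of the numerator at xhat
  have hrx : Real.sqrt (1 - xhat ^ 2) > 0 := Real.sqrt_pos.mpr (by nlinarith)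
  have hrx2 : Real.sqrt (1 - xhat ^ 2) ^ 2 = 1 - xhat ^ 2 := Real.sq_sqrt (by nlinarith)
  have hGhat : 2 * k * xhat * Real.sqrt (1 - xhat ^ 2) = 2 * xhat ^ 2 - 1 := by
    have hsqs : (2 * k * xhat * Real.sqrt (1 - xhat ^ 2)) ^ 2 = (2 * xhat ^ 2 - 1) ^ 2 := by
      have := hiden (xhat ^ 2)
      nlinarith [hrx2]
    have ha : 0 ≤ 2 * k * xhat * Real.sqrt (1 - xhat ^ 2) := by positivity
    have hb' : 0 ≤ 2 * xhat ^ 2 - 1 := by linarith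
    nlinarith [hsqs, ha, hb']
  -- derivative vanishes at xhat
  have hd0 : HasDerivAt f₃ 0 xhat := by
    have h := hderiv xhat (by linarith) hx1
    have hz : 2 * K * xhat + M * ((1 - 2 * xhat ^ 2) / Real.sqrt (1 - xhat ^ 2)) = 0 := by
      have heq : 2 * K * xhat + M * ((1 - 2 * xhat ^ 2) / Real.sqrt (1 - xhat ^ 2))
          = (2 * K * xhat * Real.sqrt (1 - xhat ^ 2) + M * (1 - 2 * xhat ^ 2))
            / Real.sqrt (1 - xhat ^ 2) := by
        field_simp
      rw [heq, div_eq_zero_iff]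
      left
      rw [hKM]
      linear_combination M * hGhat
    rwa [hz] at h
  -- positivity of derivative on (0, xhat)
  have hGpos : ∀ x : ℝ, 0 < x → x < xhat →
      0 < 2 * K * x + M * ((1 - 2 * x ^ 2) / Real.sqrt (1 - x ^ 2)) := by
    intro x hxp hxlt
    have hxlt1 : x < 1 := lt_trans hxlt hx1
    have h1x : 0 < 1 - x ^ 2 := by
      have := pow_lt_one₀ hxp.le hxlt1 two_ne_zero
      linarith
    set r := Real.sqrt (1 - x ^ 2) with hrdef
    have hr : 0 < r := Real.sqrt_pos.mpr h1x
    have hr2 : r ^ 2 = 1 - x ^ 2 := Real.sq_sqrt h1x.le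
    have hx2 : x ^ 2 < xhat ^ 2 := pow_lt_pow_left₀ hxlt hxp.le two_ne_zero
    have hpos : 0 < 2 * k * x * r := by positivity
    have key : 0 < 2 * K * x * r + M * (1 - 2 * x ^ 2) := by
      rw [hKM]
      rcases le_or_gt (2 * x ^ 2 - 1) 0 with hle | hgt
      · nlinarith [mul_pos hM hpos]
      · have hneg : (2 * x ^ 2 - 1) ^ 2 - 4 * k ^ 2 * x ^ 2 * (1 - x ^ 2) < 0 := by
          rw [hiden (x ^ 2)]
          have t1 : 0 < x ^ 2 - (1 - xhat ^ 2) := by linarith [hhalf, hgt]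
          have t2 : x ^ 2 - xhat ^ 2 < 0 := by linarith
          exact mul_neg_of_pos_of_neg (mul_pos (by positivity) t1) t2
        have ha2 : (2 * k * x * r) ^ 2 = 4 * k ^ 2 * x ^ 2 * (1 - x ^ 2) := by
          have h' : (2 * k * x * r) ^ 2 = 4 * k ^ 2 * x ^ 2 * r ^ 2 := by ring
          rw [h', hr2]
        have hab : 2 * x ^ 2 - 1 < 2 * k * x * r :=
          lt_of_pow_lt_pow_left₀ 2 hpos.le (by linarith [hneg, ha2])
        nlinarith [mul_pos hM (sub_pos.mpr hab)]
    have heq : 2 * K * x + M * ((1 - 2 * x ^ 2) / r)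
        = (2 * K * x * r + M * (1 - 2 * x ^ 2)) / r := by
      field_simp
    rw [heq]
    exact div_pos key hr
  -- negativity of derivative on (xhat, 1)
  have hGneg : ∀ x : ℝ, xhat < x → x < 1 →
      2 * K * x + M * ((1 - 2 * x ^ 2) / Real.sqrt (1 - x ^ 2)) < 0 := by
    intro x hxgt hxlt1
    have hxp : 0 < x := lt_trans hx0 hxgt
    have h1x : 0 < 1 - x ^ 2 := by
      have := pow_lt_one₀ hxp.le hxlt1 two_ne_zero
      linarith
    set r := Real.sqrt (1 - x ^ 2) with hrdef
    have hr : 0 < r := Real.sqrt_pos.mpr h1x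
    have hr2 : r ^ 2 = 1 - x ^ 2 := Real.sq_sqrt h1x.le
    have hx2 : xhat ^ 2 < x ^ 2 := pow_lt_pow_left₀ hxgt hx0.le two_ne_zero
    have hpos : 0 < 2 * k * x * r := by positivity
    have hgt : 0 < 2 * x ^ 2 - 1 := by linarith [hhalf]
    have key : 2 * K * x * r + M * (1 - 2 * x ^ 2) < 0 := by
      rw [hKM]
      have hposq : 0 < (2 * x ^ 2 - 1) ^ 2 - 4 * k ^ 2 * x ^ 2 * (1 - x ^ 2) := by
        rw [hiden (x ^ 2)]
        have t1 : 0 < x ^ 2 - (1 - xhat ^ 2) := by linarith [hhalf, hx2]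
        have t2 : 0 < x ^ 2 - xhat ^ 2 := by linarith
        positivity
      have ha2 : (2 * k * x * r) ^ 2 = 4 * k ^ 2 * x ^ 2 * (1 - x ^ 2) := by
        have h' : (2 * k * x * r) ^ 2 = 4 * k ^ 2 * x ^ 2 * r ^ 2 := by ring
        rw [h', hr2]
      have hab : 2 * k * x * r < 2 * x ^ 2 - 1 :=
        lt_of_pow_lt_pow_left₀ 2 hgt.le (by linarith [hposq, ha2])
      nlinarith [mul_pos hM (sub_pos.mpr hab)]
    have heq : 2 * K * x + M * ((1 - 2 * x ^ 2) / r)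
        = (2 * K * x * r + M * (1 - 2 * x ^ 2)) / r := by
      field_simp
    rw [heq]
    exact div_neg_of_neg_of_pos key hr
  -- continuity
  have hcont : Continuous f₃ := by
    rw [hfe]
    fun_prop
  -- non-differentiability at 1
  have hnot1 : ¬ HasDerivAt f₃ 0 1 := by
    intro h
    rw [hasDerivAt_iff_tendsto_slope] at h
    have h' : Filter.Tendsto (slope f₃ 1) (nhdsWithin 1 (Set.Iio 1)) (nhds 0) :=
      h.mono_left (nhdsWithin_mono _ (fun y hy => ne_of_lt hy))
    have hbot : Filter.Tendsto (slope f₃ 1) (nhdsWithin 1 (Set.Iio 1)) Filter.atBot := by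
      have hev : ∀ᶠ x in nhdsWithin (1:ℝ) (Set.Iio 1),
          K * (x + 1) + -(M * x * Real.sqrt (1 + x)) * (Real.sqrt (1 - x))⁻¹
            = slope f₃ 1 x := by
        filter_upwards [Ioo_mem_nhdsLT_of_mem (by norm_num : (1:ℝ) ∈ Set.Ioc (0:ℝ) 1),
          self_mem_nhdsWithin] with x hx hx1'
        obtain ⟨hx0', hxlt⟩ := hx
        have hu : 0 < Real.sqrt (1 - x) := Real.sqrt_pos.mpr (by linarith)
        have hu2 : Real.sqrt (1 - x) ^ 2 = 1 - x := Real.sq_sqrt (by linarith)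
        have hsplit : Real.sqrt (1 - x ^ 2) = Real.sqrt (1 - x) * Real.sqrt (1 + x) := by
          rw [show (1 : ℝ) - x ^ 2 = (1 - x) * (1 + x) by ring,
            Real.sqrt_mul (by linarith)]
        rw [slope_def_field, hf₃ x, hf₃ 1]
        have h11 : Real.sqrt (1 - 1 ^ 2) = 0 := by norm_num
        rw [h11, hsplit]
        have hxm1 : x - 1 ≠ 0 := by intro hc; apply absurd hxlt; simp [sub_eq_zero] at hc; simp [hc]
        field_simp
        linear_combination (-(M * x * Real.sqrt (1 + x))) * hu2
      apply Filter.Tendsto.congr' hev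
      apply Filter.Tendsto.add_atBot (C := K * (1 + 1))
      · have hc1 : Continuous (fun x : ℝ => K * (x + 1)) := by fun_prop
        exact (hc1.tendsto 1).mono_left nhdsWithin_le_nhds
      · apply Filter.Tendsto.neg_mul_atTop (C := -(M * 1 * Real.sqrt (1 + 1)))
        · have : 0 < Real.sqrt (1 + 1) := Real.sqrt_pos.mpr (by norm_num)
          nlinarith
        · have hc2 : Continuous (fun x : ℝ => -(M * x * Real.sqrt (1 + x))) := by fun_prop
          exact (hc2.tendsto 1).mono_left nhdsWithin_le_nhds
        · apply Filter.Tendsto.inv_tendsto_nhdsGT_zero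
          rw [tendsto_nhdsWithin_iff]
          constructor
          · have hc3 : Continuous (fun x : ℝ => Real.sqrt (1 - x)) := by fun_prop
            have := (hc3.tendsto 1).mono_left
              (nhdsWithin_le_nhds : nhdsWithin (1:ℝ) (Set.Iio 1) ≤ nhds 1)
            simpa using this
          · filter_upwards [self_mem_nhdsWithin] with x hx
            exact Real.sqrt_pos.mpr (by simp at hx ⊢; linarith)
    exact absurd hbot (not_tendsto_atBot_of_tendsto_nhds h')
  refine ⟨⟨hx0, hx1⟩, hd0, ?_, ?_, ?_⟩
  · -- uniqueness
    intro x hx hdx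
    rcases eq_or_lt_of_le hx.2 with h1 | hlt1
    · exact absurd (h1 ▸ hdx) hnot1
    · have hdg := hderiv x (by linarith [hx.1]) hlt1
      have h0 : 2 * K * x + M * ((1 - 2 * x ^ 2) / Real.sqrt (1 - x ^ 2)) = 0 :=
        hdg.unique hdx
      by_contra hne
      rcases lt_trichotomy x xhat with hxlt | hxeq | hxgt
      · rcases eq_or_lt_of_le hx.1 with h0' | hpos
        · rw [← h0'] at h0
          norm_num [Real.sqrt_one] at h0
          linarith [hM]
        · exact absurd h0 (ne_of_gt (hGpos x hpos hxlt))
      · exact hne hxeq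
      · exact absurd h0 (ne_of_lt (hGneg x hxgt hlt1))
  · -- strict mono on [0, xhat]
    apply strictMonoOn_of_deriv_pos (convex_Icc 0 xhat) hcont.continuousOn
    intro x hx
    rw [interior_Icc] at hx
    have hd := hderiv x (by linarith [hx.1]) (lt_trans hx.2 hx1)
    rw [hd.deriv]
    exact hGpos x hx.1 hx.2
  · -- strict anti on [xhat, 1]
    apply strictAntiOn_of_deriv_neg (convex_Icc xhat 1) hcont.continuousOn
    intro x hx
    rw [interior_Icc] at hx
    have hd := hderiv x (by linarith [hx0, hx.1]) hx.2
    rw [hd.deriv]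
    exact hGneg x hx.1 hx.2
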